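/- arXiv:1506.08766 — 5 statements merged into one kernel-verified Lean document; each statement's English description precedes it below -/
import Mathlib

section
/- Fix l > 0, a continuous function q : ℝ → ℝ with q(x) ≥ 0 for all x ∈ [0,l], and λ ∈ ℂ. If the solution S of the eigenvalue equation on [0,l] with S(0) = 0, S'(0) = 1 satisfies S(l) = 0, then λ is real and nonnegative: Im λ = 0 and Re λ ≥ 0. -/
open Set

/-- If the solution `S` of `-y'' + q y = λ y` on `[0, l]` with `S 0 = 0`, `S' 0 = 1` and
`q ≥ 0` on `[0, l]` satisfies `S l = 0`, then `λ` is real and nonnegative. -/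
theorem dirichlet_eigenvalue_nonneg (l : ℝ) (hl : 0 < l)
    (q : ℝ → ℝ) (hq_cont : ContinuousOn q (Icc 0 l))
    (hq_nonneg : ∀ x ∈ Icc 0 l, 0 ≤ q x)
    (lam : ℂ) (S S' S'' : ℝ → ℂ)
    (hS : ∀ x ∈ Icc 0 l, HasDerivAt S (S' x) x)
    (hS' : ∀ x ∈ Icc 0 l, HasDerivAt S' (S'' x) x)
    (hS'' : ContinuousOn S'' (Icc 0 l))
    (hode : ∀ x ∈ Icc 0 l, -S'' x + (q x : ℂ) * S x = lam * S x)
    (hS0 : S 0 = 0) (hS'0 : S' 0 = 1) (hSl : S l = 0) :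
    lam.im = 0 ∧ 0 ≤ lam.re := by
  have hl' : (0:ℝ) ≤ l := hl.le
  have huIcc : uIcc (0:ℝ) l = Icc 0 l := uIcc_of_le hl'
  have hScont : ContinuousOn S (Icc 0 l) :=
    fun x hx => (hS x hx).continuousAt.continuousWithinAt
  have hS'cont : ContinuousOn S' (Icc 0 l) :=
    fun x hx => (hS' x hx).continuousAt.continuousWithinAt
  -- the real integrands
  set f : ℝ → ℝ := fun x => ‖S x‖ ^ 2 with hf
  set g : ℝ → ℝ := fun x => ‖S' x‖ ^ 2 + q x * ‖S x‖ ^ 2 with hg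
  have hfcont : ContinuousOn f (Icc 0 l) := (hScont.norm.pow 2)
  have hgcont : ContinuousOn g (Icc 0 l) :=
    (hS'cont.norm.pow 2).add (hq_cont.mul (hScont.norm.pow 2))
  have hfint : IntervalIntegrable f MeasureTheory.volume 0 l := by
    apply ContinuousOn.intervalIntegrable; rwa [huIcc]
  have hgint : IntervalIntegrable g MeasureTheory.volume 0 l := by
    apply ContinuousOn.intervalIntegrable; rwa [huIcc]
  set A : ℝ := ∫ x in (0:ℝ)..l, f x with hA
  set B : ℝ := ∫ x in (0:ℝ)..l, g x with hB
  -- FTC identity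
  have hFTC : ∫ x in (0:ℝ)..l,
      ((starRingEnd ℂ) (S' x) * S' x + (starRingEnd ℂ) (S x) * S'' x) =
      (starRingEnd ℂ) (S l) * S' l - (starRingEnd ℂ) (S 0) * S' 0 := by
    apply intervalIntegral.integral_eq_sub_of_hasDerivAt
    · intro x hx
      rw [huIcc] at hx
      simpa [mul_comm, Pi.mul_def] using ((hS x hx).star.mul (hS' x hx))
    · apply ContinuousOn.intervalIntegrable
      rw [huIcc]
      exact ((Complex.continuous_conj.comp_continuousOn hS'cont).mul hS'cont).add
        ((Complex.continuous_conj.comp_continuousOn hScont).mul hS'')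
  rw [hSl, hS0] at hFTC
  simp only [map_zero, zero_mul, sub_zero] at hFTC
  -- rewrite the integrand using the ODE
  have hcongr : ∫ x in (0:ℝ)..l,
      ((starRingEnd ℂ) (S' x) * S' x + (starRingEnd ℂ) (S x) * S'' x) =
      ∫ x in (0:ℝ)..l, (((g x : ℝ) : ℂ) - lam * ((f x : ℝ) : ℂ)) := by
    apply intervalIntegral.integral_congr
    intro x hx
    rw [huIcc] at hx
    have h2 : S'' x = (q x : ℂ) * S x - lam * S x := by
      have := hode x hx; linear_combination -this
    have e1 : (starRingEnd ℂ) (S' x) * S' x = ((‖S' x‖:ℂ)) ^ 2 := Complex.conj_mul' _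
    have e2 : (starRingEnd ℂ) (S x) * S x = ((‖S x‖:ℂ)) ^ 2 := Complex.conj_mul' _
    simp only [hf, hg]
    push_cast
    linear_combination e1 + (((q x:ℂ)) - lam) * e2 + (starRingEnd ℂ) (S x) * h2
  have hsplit : ∫ x in (0:ℝ)..l, (((g x : ℝ) : ℂ) - lam * ((f x : ℝ) : ℂ)) =
      (B : ℂ) - lam * (A : ℂ) := by
    have hgint' : IntervalIntegrable (fun x => ((g x : ℝ) : ℂ)) MeasureTheory.volume 0 l := by
      apply ContinuousOn.intervalIntegrable; rw [huIcc]
      exact Complex.continuous_ofReal.comp_continuousOn hgcont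
    have hfint' : IntervalIntegrable (fun x => lam * ((f x : ℝ) : ℂ)) MeasureTheory.volume 0 l := by
      apply ContinuousOn.intervalIntegrable; rw [huIcc]
      exact continuousOn_const.mul (Complex.continuous_ofReal.comp_continuousOn hfcont)
    have e1 : (∫ x in (0:ℝ)..l, ((g x : ℝ) : ℂ)) = ((B:ℝ):ℂ) := RCLike.intervalIntegral_ofReal
    have e2 : (∫ x in (0:ℝ)..l, ((f x : ℝ) : ℂ)) = ((A:ℝ):ℂ) := RCLike.intervalIntegral_ofReal
    rw [intervalIntegral.integral_sub hgint' hfint', intervalIntegral.integral_const_mul, e1, e2]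
  have key : (B : ℂ) - lam * (A : ℂ) = 0 := by rw [← hsplit, ← hcongr, hFTC]
  -- A > 0
  have hx0 : ∃ x₀ ∈ Ioo (0:ℝ) l, S x₀ ≠ 0 := by
    by_contra hcon
    push_neg at hcon
    have hzero : ∀ x ∈ Icc (0:ℝ) l, S x = 0 := by
      intro x hx
      rcases eq_or_lt_of_le hx.1 with h | h
      · rw [← h]; exact hS0
      rcases eq_or_lt_of_le hx.2 with h' | h'
      · rw [h']; exact hSl
      exact hcon x ⟨h, h'⟩
    have h1 : HasDerivWithinAt S (1:ℂ) (Icc 0 l) 0 := by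
      have := (hS 0 (left_mem_Icc.mpr hl')).hasDerivWithinAt (s := Icc 0 l)
      rwa [hS'0] at this
    have h0 : HasDerivWithinAt S (0:ℂ) (Icc 0 l) 0 := by
      apply (hasDerivWithinAt_const (0:ℝ) (Icc (0:ℝ) l) (0:ℂ)).congr hzero hS0
    have hu : UniqueDiffWithinAt ℝ (Icc (0:ℝ) l) 0 :=
      (uniqueDiffOn_Icc hl) 0 (left_mem_Icc.mpr hl')
    have : (1:ℂ) = 0 := by rw [← h1.derivWithin hu, ← h0.derivWithin hu]
    simp at this
  have hApos : 0 < A := by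
    obtain ⟨x₀, hx₀, hSx₀⟩ := hx0
    rw [hA, intervalIntegral.integral_pos_iff_support_of_nonneg_ae]
    · refine ⟨hl, ?_⟩
      have hnhds : Function.support f ∩ Ioc 0 l ∈ nhds x₀ := by
        have hSc : ContinuousAt S x₀ :=
          (hS x₀ (Ioo_subset_Icc_self hx₀)).continuousAt
        have h1 : ∀ᶠ y in nhds x₀, S y ≠ 0 := hSc.eventually_ne hSx₀
        have h2 : ∀ᶠ y in nhds x₀, y ∈ Ioo (0:ℝ) l := isOpen_Ioo.eventually_mem hx₀
        filter_upwards [h1, h2] with y hy1 hy2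
        exact ⟨by simp [hf, Function.mem_support, hy1, norm_eq_zero, pow_eq_zero_iff],
          Ioo_subset_Ioc_self hy2⟩
      exact MeasureTheory.Measure.measure_pos_of_mem_nhds _ hnhds
    · filter_upwards with x
      positivity
    · exact hfint
  have hBnonneg : 0 ≤ B := by
    apply intervalIntegral.integral_nonneg hl'
    intro u hu
    have := hq_nonneg u hu
    positivity
  -- conclude
  have him : lam.im * A = 0 := by
    have := congrArg Complex.im key
    simpa using this
  have hre : B = lam.re * A := by
    have := congrArg Complex.re key
    simp at this
    linarith
  constructor
  · rcases mul_eq_zero.mp him with h | h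
    · exact h
    · exact absurd h hApos.ne'
  · have hh : 0 ≤ lam.re * A := hre ▸ hBnonneg
    by_contra hneg
    push_neg at hneg
    nlinarith
end

section
/- Fix l > 0, a continuous function q : ℝ → ℝ satisfying the evenness condition q(l − x) = q(x) for all x ∈ [0,l], and λ ∈ ℂ, and let C and S be the solutions of the eigenvalue equation on [0,l] with C(0) = 1, C'(0) = 0 and S(0) = 0, S'(0) = 1. Then for every x ∈ [0,l], C(l − x) = S'(l)·C(x) − C'(l)·S(x); in particular, taking x = 0, C(l) = S'(l). -/
open Set

private lemma const_on_Icc' {f : ℝ → ℂ} {a b : ℝ}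
    (hf : ∀ x ∈ Icc a b, HasDerivAt f 0 x) : ∀ x ∈ Icc a b, f x = f a :=
  constant_of_has_deriv_right_zero
    (fun t ht => (hf t ht).continuousAt.continuousWithinAt)
    (fun t ht => (hf t (Ico_subset_Icc_self ht)).hasDerivWithinAt)

/-- For an even potential, `q (l - x) = q x` on `[0, l]`, the solutions `C`, `S` of
`-y'' + q y = λ y` with `C 0 = 1`, `C' 0 = 0`, `S 0 = 0`, `S' 0 = 1` satisfy
`C (l - x) = S' l * C x - C' l * S x` on `[0, l]`; in particular `C l = S' l`. -/
theorem even_potential_identity (l : ℝ) (hl : 0 < l)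
    (q : ℝ → ℝ) (hq_cont : ContinuousOn q (Icc 0 l))
    (hq_even : ∀ x ∈ Icc 0 l, q (l - x) = q x) (lam : ℂ)
    (C C' C'' S S' S'' : ℝ → ℂ)
    (hC : ∀ x ∈ Icc 0 l, HasDerivAt C (C' x) x)
    (hC' : ∀ x ∈ Icc 0 l, HasDerivAt C' (C'' x) x)
    (hC'' : ContinuousOn C'' (Icc 0 l))
    (hCode : ∀ x ∈ Icc 0 l, -C'' x + (q x : ℂ) * C x = lam * C x)
    (hS : ∀ x ∈ Icc 0 l, HasDerivAt S (S' x) x)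
    (hS' : ∀ x ∈ Icc 0 l, HasDerivAt S' (S'' x) x)
    (hS'' : ContinuousOn S'' (Icc 0 l))
    (hSode : ∀ x ∈ Icc 0 l, -S'' x + (q x : ℂ) * S x = lam * S x)
    (hC0 : C 0 = 1) (hC'0 : C' 0 = 0) (hS0 : S 0 = 0) (hS'0 : S' 0 = 1) :
    (∀ x ∈ Icc 0 l, C (l - x) = S' l * C x - C' l * S x) ∧ C l = S' l := by
  have hl0 : (0:ℝ) ∈ Icc (0:ℝ) l := ⟨le_refl 0, le_of_lt hl⟩
  have hll : l ∈ Icc (0:ℝ) l := ⟨le_of_lt hl, le_refl l⟩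
  have hmem : ∀ x ∈ Icc (0:ℝ) l, l - x ∈ Icc (0:ℝ) l := by
    intro x hx; exact ⟨by linarith [hx.2], by linarith [hx.1]⟩
  -- ODE in solved form
  have hCpp : ∀ x ∈ Icc (0:ℝ) l, C'' x = ((q x : ℂ) - lam) * C x := by
    intro x hx; linear_combination -hCode x hx
  have hSpp : ∀ x ∈ Icc (0:ℝ) l, S'' x = ((q x : ℂ) - lam) * S x := by
    intro x hx; linear_combination -hSode x hx
  have hCppr : ∀ x ∈ Icc (0:ℝ) l, C'' (l - x) = ((q x : ℂ) - lam) * C (l - x) := by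
    intro x hx
    have := hCpp (l - x) (hmem x hx)
    rwa [hq_even x hx] at this
  -- derivatives of reflected functions
  have hy : ∀ x ∈ Icc (0:ℝ) l, HasDerivAt (fun t => C (l - t)) (-C' (l - x)) x := by
    intro x hx
    have h1 : HasDerivAt (fun t : ℝ => l - t) (-1) x := (hasDerivAt_id x).const_sub l
    have := (hC _ (hmem x hx)).scomp x h1
    simpa [Function.comp_def] using this
  have hy' : ∀ x ∈ Icc (0:ℝ) l, HasDerivAt (fun t => C' (l - t)) (-C'' (l - x)) x := by
    intro x hx
    have h1 : HasDerivAt (fun t : ℝ => l - t) (-1) x := (hasDerivAt_id x).const_sub l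
    have := (hC' _ (hmem x hx)).scomp x h1
    simpa [Function.comp_def] using this
  -- three constant Wronskians
  have hW1 : ∀ x ∈ Icc (0:ℝ) l,
      C (l - x) * S' x + C' (l - x) * S x = C l * S' 0 + C' l * S 0 := by
    have := const_on_Icc' (f := fun t => C (l - t) * S' t + C' (l - t) * S t)
      (a := 0) (b := l) ?_
    · simpa using this
    · intro x hx
      have h := ((hy x hx).mul (hS' x hx)).add ((hy' x hx).mul (hS x hx))
      have e : -C' (l - x) * S' x + C (l - x) * S'' x +
          (-C'' (l - x) * S x + C' (l - x) * S' x) = 0 := by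
        rw [hSpp x hx, hCppr x hx]; ring
      rwa [e] at h
  have hW2 : ∀ x ∈ Icc (0:ℝ) l,
      -(C' (l - x)) * C x - C (l - x) * C' x = -(C' l) * C 0 - C l * C' 0 := by
    have := const_on_Icc' (f := fun t => -(C' (l - t)) * C t - C (l - t) * C' t)
      (a := 0) (b := l) ?_
    · simpa using this
    · intro x hx
      have h := (((hy' x hx).neg).mul (hC x hx)).sub ((hy x hx).mul (hC' x hx))
      have e : -(-C'' (l - x)) * C x + -C' (l - x) * C' x -
          (-C' (l - x) * C' x + C (l - x) * C'' x) = 0 := by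
        rw [hCpp x hx, hCppr x hx]; ring
      simp only [Pi.neg_apply] at h
      rwa [e] at h
  have hW3 : ∀ x ∈ Icc (0:ℝ) l, C x * S' x - C' x * S x = C 0 * S' 0 - C' 0 * S 0 := by
    have := const_on_Icc' (f := fun t => C t * S' t - C' t * S t) (a := 0) (b := l) ?_
    · simpa using this
    · intro x hx
      have h := ((hC x hx).mul (hS' x hx)).sub ((hC' x hx).mul (hS x hx))
      have e : C' x * S' x + C x * S'' x - (C'' x * S x + C' x * S' x) = 0 := by
        rw [hSpp x hx, hCpp x hx]; ring
      rwa [e] at h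
  -- evaluate constants at the right endpoints
  have hW1l := hW1 l hll
  rw [sub_self, hC0, hC'0, hS0, hS'0] at hW1l
  -- hW1l : 1 * S' l + 0 * S l = C l * 1 + C' l * 0
  have main : ∀ x ∈ Icc (0:ℝ) l, C (l - x) = S' l * C x - C' l * S x := by
    intro x hx
    have h1 := hW1 x hx
    have h2 := hW2 x hx
    have h3 := hW3 x hx
    rw [hS0, hS'0] at h1
    rw [hC0, hC'0] at h2
    rw [hC0, hC'0, hS0, hS'0] at h3
    linear_combination C x * h1 + S x * h2 - C (l - x) * h3 - C x * hW1l
  refine ⟨main, ?_⟩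
  have := main 0 hl0
  rw [sub_zero, hC0, hS0] at this
  simpa using this
end

section
/- Fix l > 0, a continuous function q : ℝ → ℝ satisfying the evenness condition q(l − x) = q(x) for all x ∈ [0,l], and λ ∈ ℂ, and let C and S be the solutions of the eigenvalue equation on [0,l] with C(0) = 1, C'(0) = 0 and S(0) = 0, S'(0) = 1. Assume S(l) ≠ 0, let μ ∈ ℂ, and define y₊(x) = C(x) + ((μ − C(l))/S(l))·S(x) and y₋(x) = C(l − x) − ((C(l) − μ)/S(l))·S(l − x). Then the Wronskian of y₊ and y₋ is constant with value y₊(x)·y₋'(x) − y₊'(x)·y₋(x) = (1 − μ²)/S(l) for all x ∈ [0,l]. -/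
open Set

private lemma const_of_deriv_zero (a b : ℝ) (f f' : ℝ → ℂ)
    (hf : ∀ x ∈ Icc a b, HasDerivAt f (f' x) x)
    (h0 : ∀ x ∈ Icc a b, f' x = 0) :
    ∀ x ∈ Icc a b, f x = f a := by
  apply constant_of_has_deriv_right_zero
  · exact fun x hx => (hf x hx).continuousAt.continuousWithinAt
  · intro x hx
    have hx' : x ∈ Icc a b := Ico_subset_Icc_self hx
    have := (hf x hx').hasDerivWithinAt (s := Ici x)
    rwa [h0 x hx'] at this

/-- For an even potential and `S l ≠ 0`, the functions
`y₊ x = C x + ((μ - C l) / S l) * S x` and `y₋ x = C (l - x) - ((C l - μ) / S l) * S (l - x)`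
(with `y₊ 0 = 1`, `y₊ l = μ`, `y₋ l = 1`, `y₋ 0 = μ`) have constant Wronskian
`y₊ y₋' - y₊' y₋ = (1 - μ²) / S l` on `[0, l]`. -/
theorem multiplier_wronskian (l : ℝ) (hl : 0 < l)
    (q : ℝ → ℝ) (hq_cont : ContinuousOn q (Icc 0 l))
    (hq_even : ∀ x ∈ Icc 0 l, q (l - x) = q x) (lam : ℂ)
    (C C' C'' S S' S'' : ℝ → ℂ)
    (hC : ∀ x ∈ Icc 0 l, HasDerivAt C (C' x) x)
    (hC' : ∀ x ∈ Icc 0 l, HasDerivAt C' (C'' x) x)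
    (hC'' : ContinuousOn C'' (Icc 0 l))
    (hCode : ∀ x ∈ Icc 0 l, -C'' x + (q x : ℂ) * C x = lam * C x)
    (hS : ∀ x ∈ Icc 0 l, HasDerivAt S (S' x) x)
    (hS' : ∀ x ∈ Icc 0 l, HasDerivAt S' (S'' x) x)
    (hS'' : ContinuousOn S'' (Icc 0 l))
    (hSode : ∀ x ∈ Icc 0 l, -S'' x + (q x : ℂ) * S x = lam * S x)
    (hC0 : C 0 = 1) (hC'0 : C' 0 = 0) (hS0 : S 0 = 0) (hS'0 : S' 0 = 1)
    (hSl : S l ≠ 0) (μ : ℂ) :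
    ∀ x ∈ Icc 0 l,
      (C x + ((μ - C l) / S l) * S x) * (-C' (l - x) + ((C l - μ) / S l) * S' (l - x))
        - (C' x + ((μ - C l) / S l) * S' x) * (C (l - x) - ((C l - μ) / S l) * S (l - x))
      = (1 - μ ^ 2) / S l := by
  have hmem : ∀ x ∈ Icc (0:ℝ) l, l - x ∈ Icc (0:ℝ) l := by
    intro x hx
    exact ⟨by linarith [hx.2], by linarith [hx.1]⟩
  have hsub : ∀ x : ℝ, HasDerivAt (fun t : ℝ => l - t) (-1) x := by
    intro x
    simpa using (hasDerivAt_id x).const_sub l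
  -- ODE rearranged
  have hC2 : ∀ x ∈ Icc (0:ℝ) l, C'' x = (q x : ℂ) * C x - lam * C x := by
    intro x hx; linear_combination - hCode x hx
  have hS2 : ∀ x ∈ Icc (0:ℝ) l, S'' x = (q x : ℂ) * S x - lam * S x := by
    intro x hx; linear_combination - hSode x hx
  have hC2r : ∀ x ∈ Icc (0:ℝ) l, C'' (l - x) = (q x : ℂ) * C (l - x) - lam * C (l - x) := by
    intro x hx
    have h := hC2 (l - x) (hmem x hx)
    rwa [hq_even x hx] at h
  have hS2r : ∀ x ∈ Icc (0:ℝ) l, S'' (l - x) = (q x : ℂ) * S (l - x) - lam * S (l - x) := by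
    intro x hx
    have h := hS2 (l - x) (hmem x hx)
    rwa [hq_even x hx] at h
  -- Fact 1 : C l * S' l - C' l * S l = 1 (Wronskian of C, S)
  have hW1 : C l * S' l - C' l * S l = 1 := by
    have hconst := const_of_deriv_zero 0 l (fun x => C x * S' x - C' x * S x)
      (fun x => C x * S'' x - C'' x * S x)
      (by
        intro x hx
        have h := ((hC x hx).mul (hS' x hx)).sub ((hC' x hx).mul (hS x hx))
        refine h.congr_deriv ?_
        ring)
      (by
        intro x hx
        simp only [hC2 x hx, hS2 x hx]; ring)
    have h := hconst l ⟨le_of_lt hl, le_refl l⟩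
    simp only [hC0, hC'0, hS0, hS'0] at h
    rw [h]; ring
  -- Fact 2 : S' l = C l (even potential symmetry)
  have hW3 : S' l = C l := by
    have hconst := const_of_deriv_zero 0 l
      (fun x => S (l - x) * C' x + S' (l - x) * C x)
      (fun x => S (l - x) * C'' x - S'' (l - x) * C x)
      (by
        intro x hx
        have hSc : HasDerivAt (fun t : ℝ => S (l - t)) ((-1 : ℝ) • S' (l - x)) x :=
          (hS (l - x) (hmem x hx)).scomp x (hsub x)
        have hS'c : HasDerivAt (fun t : ℝ => S' (l - t)) ((-1 : ℝ) • S'' (l - x)) x :=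
          (hS' (l - x) (hmem x hx)).scomp x (hsub x)
        have h := (hSc.mul (hC' x hx)).add (hS'c.mul (hC x hx))
        refine h.congr_deriv ?_
        simp [neg_one_smul]
        ring)
      (by
        intro x hx
        simp only [hC2 x hx, hS2r x hx]; ring)
    have h := hconst l ⟨le_of_lt hl, le_refl l⟩
    simp only [sub_self, sub_zero] at h
    rw [hC0, hS0, hS'0, hC'0] at h
    simpa using h.symm
  -- The main Wronskian is constant
  set a : ℂ := (μ - C l) / S l with ha
  set b : ℂ := (C l - μ) / S l with hb
  have hconst := const_of_deriv_zero 0 l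
    (fun x => (C x + a * S x) * (-C' (l - x) + b * S' (l - x))
      - (C' x + a * S' x) * (C (l - x) - b * S (l - x)))
    (fun x => (C x + a * S x) * (C'' (l - x) - b * S'' (l - x))
      - (C'' x + a * S'' x) * (C (l - x) - b * S (l - x)))
    (by
      intro x hx
      have hlx := hmem x hx
      have hCc : HasDerivAt (fun t : ℝ => C (l - t)) ((-1 : ℝ) • C' (l - x)) x :=
        (hC (l - x) hlx).scomp x (hsub x)
      have hC'c : HasDerivAt (fun t : ℝ => C' (l - t)) ((-1 : ℝ) • C'' (l - x)) x :=
        (hC' (l - x) hlx).scomp x (hsub x)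
      have hSc : HasDerivAt (fun t : ℝ => S (l - t)) ((-1 : ℝ) • S' (l - x)) x :=
        (hS (l - x) hlx).scomp x (hsub x)
      have hS'c : HasDerivAt (fun t : ℝ => S' (l - t)) ((-1 : ℝ) • S'' (l - x)) x :=
        (hS' (l - x) hlx).scomp x (hsub x)
      have hf1 : HasDerivAt (fun t : ℝ => C t + a * S t) (C' x + a * S' x) x :=
        (hC x hx).add ((hS x hx).const_mul a)
      have hf2 : HasDerivAt (fun t : ℝ => -C' (l - t) + b * S' (l - t))
          (-((-1 : ℝ) • C'' (l - x)) + b * ((-1 : ℝ) • S'' (l - x))) x :=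
        hC'c.neg.add (hS'c.const_mul b)
      have hf3 : HasDerivAt (fun t : ℝ => C' t + a * S' t) (C'' x + a * S'' x) x :=
        (hC' x hx).add ((hS' x hx).const_mul a)
      have hf4 : HasDerivAt (fun t : ℝ => C (l - t) - b * S (l - t))
          (((-1 : ℝ) • C' (l - x)) - b * ((-1 : ℝ) • S' (l - x))) x :=
        hCc.sub (hSc.const_mul b)
      have h := (hf1.mul hf2).sub (hf3.mul hf4)
      refine h.congr_deriv ?_
      simp [neg_one_smul]
      ring)
    (by
      intro x hx
      simp only [hC2 x hx, hS2 x hx, hC2r x hx, hS2r x hx]; ring)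
  intro x hx
  have h := hconst x hx
  simp only [sub_zero] at h
  rw [h, hC0, hC'0, hS0, hS'0]
  rw [hW3] at hW1 ⊢
  rw [ha, hb]
  field_simp
  linear_combination S l * hW1
end

section
/- Let M ≥ 1, let s_1, …, s_M be nonzero complex numbers, and let ξ_1, …, ξ_M be complex numbers with ξ_m ≠ 0 and ξ_m² + 1 ≠ 0 for all m. For each m define the vector v_m ∈ ℂ^M whose m-th component is (1/ξ_m² − 1)/s_m and whose j-th component for j ≠ m is −2/s_j. If ∑_{m=1}^{M} ξ_m²/(ξ_m² + 1) ≠ 1/2, then the vectors v_1, …, v_M are linearly independent over ℂ. -/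
/-- Linear independence of the gradients of the multiplier-equation polynomials: if
`∑ ξ_m²/(ξ_m² + 1) ≠ 1/2`, the vectors `v_m` with `m`-th component `(1/ξ_m² − 1)/s_m`
and `j`-th component `−2/s_j` for `j ≠ m` are linearly independent over `ℂ`. -/
theorem multiplier_gradients_linearIndependent (M : ℕ) (hM : 1 ≤ M)
    (s ξ : Fin M → ℂ)
    (hs : ∀ m, s m ≠ 0) (hξ : ∀ m, ξ m ≠ 0) (hξ1 : ∀ m, ξ m ^ 2 + 1 ≠ 0)
    (hsum : ∑ m : Fin M, ξ m ^ 2 / (ξ m ^ 2 + 1) ≠ 1 / 2) :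
    LinearIndependent ℂ
      (fun m : Fin M => fun j : Fin M =>
        if j = m then (1 / ξ m ^ 2 - 1) / s m else -2 / s j) := by
  rw [Fintype.linearIndependent_iff]
  intro g hg
  set T := ∑ m : Fin M, g m with hT
  have key : ∀ j, g j * (ξ j ^ 2 + 1) = 2 * T * ξ j ^ 2 := by
    intro j
    have h0 := congrFun hg j
    simp only [Finset.sum_apply, Pi.smul_apply, smul_eq_mul] at h0
    have hsplit : ∑ m : Fin M, g m * (if j = m then (1 / ξ m ^ 2 - 1) / s m else -2 / s j)
        = g j * ((1 / ξ j ^ 2 - 1) / s j) + (∑ m ∈ Finset.univ.erase j, g m) * (-2 / s j) := by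
      rw [← Finset.add_sum_erase _ _ (Finset.mem_univ j)]
      simp only [if_pos rfl, Finset.sum_mul]
      congr 1
      apply Finset.sum_congr rfl
      intro m hm
      rw [if_neg (Ne.symm (Finset.ne_of_mem_erase hm))]
    have herase : ∑ m ∈ Finset.univ.erase j, g m = T - g j := by
      rw [hT, ← Finset.add_sum_erase _ _ (Finset.mem_univ j)]
      ring
    rw [hsplit, herase] at h0
    have hξ2 : ξ j ^ 2 ≠ 0 := pow_ne_zero 2 (hξ j)
    have hsj := hs j
    field_simp [hξ2, hsj] at h0
    apply mul_right_cancel₀ hsj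
    have e : ξ j ^ 2 * (1 / ξ j ^ 2) = 1 := mul_one_div_cancel hξ2
    simp only [Pi.zero_apply, mul_zero] at h0
    linear_combination (ξ j ^ 2 * s j) * h0 - (g j * s j) * e
  by_cases hT0 : T = 0
  · intro j
    have := key j
    rw [hT0] at this
    have h1 : g j * (ξ j ^ 2 + 1) = 0 := by linear_combination this
    exact (mul_eq_zero.mp h1).resolve_right (hξ1 j)
  · exfalso
    apply hsum
    have hsum2 : T = ∑ j : Fin M, 2 * T * (ξ j ^ 2 / (ξ j ^ 2 + 1)) := by
      rw [hT]
      apply Finset.sum_congr rfl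
      intro j _
      have := key j
      field_simp [hξ1 j]
      linear_combination this
    rw [← Finset.mul_sum] at hsum2
    have : 2 * T * (∑ j : Fin M, ξ j ^ 2 / (ξ j ^ 2 + 1)) = 2 * T * (1/2) := by
      rw [← hsum2]; ring
    have h2T : (2 : ℂ) * T ≠ 0 := by
      simp [hT0]
    exact mul_left_cancel₀ h2T this
end

section
/- Let μ₁, μ₂, C₁, C₂, S₁, S₂ be complex numbers with S₁ ≠ 0, S₂ ≠ 0, μ₁ ≠ 0, μ₂ ≠ 0, satisfying the coupled system (μ₁² − 1)/(S₁·μ₁) = 2·(μ₁ − C₁)/S₁ + 2·(μ₂ − C₂)/S₂ and (μ₂² − 1)/(S₂·μ₂) = 2·(μ₁ − C₁)/S₁ + 2·(μ₂ − C₂)/S₂. Then μ₁ satisfies the quartic equation 3·S₂²·μ₁⁴ − 8·(S₁·C₂·S₂ + S₂²·C₁)·μ₁³ + (2·S₂² − 4·S₁² + 4·S₂²·C₁² + 4·C₂²·S₁² + 8·S₁·C₂·S₂·C₁)·μ₁² − S₂² = 0. -/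
/-- Elimination of `μ₂` from the coupled system of multiplier equations for the metric Cayley
graph `𝒯₂` of the free group on two generators: `μ₁` satisfies a quartic equation with
coefficients built from `C₁, C₂, S₁, S₂`. -/
theorem multiplier_quartic (μ₁ μ₂ C₁ C₂ S₁ S₂ : ℂ)
    (hS₁ : S₁ ≠ 0) (hS₂ : S₂ ≠ 0) (hμ₁ : μ₁ ≠ 0) (hμ₂ : μ₂ ≠ 0)
    (h1 : (μ₁ ^ 2 - 1) / (S₁ * μ₁) = 2 * (μ₁ - C₁) / S₁ + 2 * (μ₂ - C₂) / S₂)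
    (h2 : (μ₂ ^ 2 - 1) / (S₂ * μ₂) = 2 * (μ₁ - C₁) / S₁ + 2 * (μ₂ - C₂) / S₂) :
    3 * S₂ ^ 2 * μ₁ ^ 4 - 8 * (S₁ * C₂ * S₂ + S₂ ^ 2 * C₁) * μ₁ ^ 3
      + (2 * S₂ ^ 2 - 4 * S₁ ^ 2 + 4 * S₂ ^ 2 * C₁ ^ 2 + 4 * C₂ ^ 2 * S₁ ^ 2
          + 8 * S₁ * C₂ * S₂ * C₁) * μ₁ ^ 2
      - S₂ ^ 2 = 0 := by
  field_simp at h1 h2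
  have key : S₁ ^ 2 * S₂ *
      (3 * S₂ ^ 2 * μ₁ ^ 4 - 8 * (S₁ * C₂ * S₂ + S₂ ^ 2 * C₁) * μ₁ ^ 3
        + (2 * S₂ ^ 2 - 4 * S₁ ^ 2 + 4 * S₂ ^ 2 * C₁ ^ 2 + 4 * C₂ ^ 2 * S₁ ^ 2
            + 8 * S₁ * C₂ * S₂ * C₁) * μ₁ ^ 2
        - S₂ ^ 2) = 0 := by
    linear_combination
      (-(S₁ ^ 2 * S₂) * (S₂ * (μ₁ ^ 2 - 1) + 2 * μ₁ * ((μ₁ - C₁) * S₂ + S₁ * (μ₂ - C₂)))) * h1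
      + (S₁ ^ 2 * S₂ * (4 * μ₁ ^ 2 * S₁)) * h2
  have hne : S₁ ^ 2 * S₂ ≠ 0 := by
    exact mul_ne_zero (pow_ne_zero 2 hS₁) hS₂
  exact (mul_eq_zero.mp key).resolve_left hne
end
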